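/- Every compact metrizable absolute neighborhood retract X is e-open: for every compact metrizable Y, closed Z ⊆ Y, continuous maps φₙ : Z → X converging uniformly to φ : Z → X, if φ extends to a continuous map Y → X then φₙ extends to a continuous map Y → X for all sufficiently large n. -/

import Mathlib

open Set Filter

/-- A map `f : Z → X` on a closed subspace `Z` of `Y` extends to a continuous map on `Y`. -/
def ExtendsTo {X Y : Type*} [TopologicalSpace X] [TopologicalSpace Y]
    (Z : Set Y) (f : C(Z, X)) : Prop :=
  ∃ g : C(Y, X), ∀ z : Z, g z.1 = f z

/-- `X` is an ANR: every map into `X` from a closed subspace of a compact metrizable space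
extends to an open neighborhood. -/
def IsANR (X : Type*) [TopologicalSpace X] : Prop :=
  ∀ (Y : Type) [MetricSpace Y] [CompactSpace Y] (Z : Set Y), IsClosed Z →
    ∀ φ : C(Z, X), ∃ U : Set Y, IsOpen U ∧ Z ⊆ U ∧
      ∃ g : C(U, X), ∀ (y : Y) (hz : y ∈ Z) (hu : y ∈ U), g ⟨y, hu⟩ = φ ⟨y, hz⟩

/-- Every compact metrizable ANR is e-open: if extendible `φ` is the uniform limit of maps
`φₙ`, and `φ` extends to `Y`, then `φₙ` extends to `Y` for all sufficiently large `n`. -/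
theorem isANR_eOpen {X : Type} [MetricSpace X] [CompactSpace X] (hX : IsANR X)
    {Y : Type} [MetricSpace Y] [CompactSpace Y] (Z : Set Y) (hZ : IsClosed Z)
    (φ : ℕ → C(Z, X)) (φl : C(Z, X))
    (hconv : TendstoUniformly (fun n => ⇑(φ n)) (⇑φl) atTop)
    (hext : ExtendsTo Z φl) :
    ∀ᶠ n in atTop, ExtendsTo Z (φ n) := by
  classical
  -- The "local homotopy" gadget from the ANR property of X.
  set Z₁ : Set (X × X × unitInterval) :=
    {p | p.2.2 = 0 ∨ (p.1 = p.2.1 ∨ p.2.2 = 1)} with hZ₁def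
  have hZ₁closed : IsClosed Z₁ := by
    have : Z₁ = {p : X × X × unitInterval | p.2.2 = 0} ∪
        ({p | p.1 = p.2.1} ∪ {p | p.2.2 = 1}) := rfl
    rw [this]
    exact ((isClosed_eq continuous_snd.snd continuous_const).union
      ((isClosed_eq continuous_fst continuous_snd.fst).union
        (isClosed_eq continuous_snd.snd continuous_const)))
  have hψ : Continuous (fun p : Z₁ =>
      if ((p.1.2.2 : ℝ) ≤ 1/2) then p.1.1 else p.1.2.1) := by
    apply Continuous.if
    · intro a ha
      have h12 : ((a.1.2.2 : ℝ)) = 1/2 := by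
        have := frontier_le_subset_eq (f := fun p : Z₁ => ((p.1.2.2 : ℝ)))
          (g := fun _ => (1/2 : ℝ)) continuous_subtype_val.snd.snd.subtype_val
          continuous_const ha
        exact this
      rcases a.2 with h | h | h
      · exfalso; rw [h] at h12; norm_num at h12
      · exact h
      · exfalso; rw [h] at h12; norm_num at h12
    · exact continuous_fst.comp continuous_subtype_val
    · exact (continuous_fst.comp continuous_snd).comp continuous_subtype_val
  obtain ⟨W, hWopen, hZ₁W, H, hHspec⟩ :=
    hX (X × X × unitInterval) Z₁ hZ₁closed ⟨_, hψ⟩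
  -- a tube around the diagonal lies in W
  have hKcomp : IsCompact {p : X × X × unitInterval | p.1 = p.2.1} :=
    (isClosed_eq continuous_fst (continuous_fst.comp continuous_snd)).isCompact
  obtain ⟨δ, hδpos, hδW⟩ := hKcomp.exists_thickening_subset_open hWopen
    (fun p hp => hZ₁W (Or.inr (Or.inl hp)))
  have htube : ∀ p : X × X × unitInterval, dist p.2.1 p.1 < δ → p ∈ W := by
    intro p hp
    apply hδW
    rw [Metric.mem_thickening_iff]
    refine ⟨(p.1, p.1, p.2.2), rfl, ?_⟩
    simp [Prod.dist_eq]
    exact hp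
  rw [Metric.tendstoUniformly_iff] at hconv
  filter_upwards [hconv δ hδpos] with n hn
  obtain ⟨g, hg⟩ := hext
  obtain ⟨U, hUopen, hZU, gn, hgn⟩ := hX Y Z hZ (φ n)
  set O : Set Y := {y : Y | ∃ h : y ∈ U, dist (gn ⟨y, h⟩) (g y) < δ} with hOdef
  have hOopen : IsOpen O := by
    have : O = Subtype.val '' {u : U | dist (gn u) (g u.1) < δ} := by
      ext y
      constructor
      · rintro ⟨h, hd⟩; exact ⟨⟨y, h⟩, hd, rfl⟩
      · rintro ⟨u, hu, rfl⟩; exact ⟨u.2, hu⟩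
    rw [this]
    exact hUopen.isOpenMap_subtype_val _
      (isOpen_lt (gn.continuous.dist (g.continuous.comp continuous_subtype_val))
        continuous_const)
  have hZO : Z ⊆ O := by
    intro z hz
    refine ⟨hZU hz, ?_⟩
    rw [hgn z hz (hZU hz), hg ⟨z, hz⟩, dist_comm]
    exact hn ⟨z, hz⟩
  obtain ⟨V, hVopen, hZV, hVO⟩ := normal_exists_closure_subset hZ hOopen hZO
  obtain ⟨u, hu0, hu1, hu01⟩ := exists_continuous_zero_one_of_isClosed
    (isClosed_compl_iff.2 hVopen) hZ (Set.disjoint_left.2 fun y hyc hyZ => hyc (hZV hyZ))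
  set u' : C(Y, unitInterval) := ⟨fun y => ⟨u y, hu01 y⟩, u.continuous.subtype_mk _⟩
    with hu'def
  have hcVU : closure V ⊆ U := fun y hy => (hVO hy).choose
  have hcVW : ∀ y (hy : y ∈ closure V),
      ((g y, ((gn ⟨y, hcVU hy⟩ : X), u' y)) : X × X × unitInterval) ∈ W := by
    intro y hy
    obtain ⟨h, hd⟩ := hVO hy
    exact htube _ hd
  set F : Y → X := fun y =>
    if hy : y ∈ closure V then H ⟨(g y, gn ⟨y, hcVU hy⟩, u' y), hcVW y hy⟩ else g y
    with hFdef
  have hF1 : ContinuousOn F (closure V) := by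
    rw [continuousOn_iff_continuous_restrict]
    have heq : (closure V).domRestrict F = fun y : closure V =>
        H ⟨(g y.1, gn ⟨y.1, hcVU y.2⟩, u' y.1), hcVW y.1 y.2⟩ := by
      funext y
      show F y.1 = _
      simp only [hFdef]
      rw [dif_pos y.2]
    rw [heq]
    exact H.continuous.comp (Continuous.subtype_mk
      ((g.continuous.comp continuous_subtype_val).prodMk
        ((gn.continuous.comp (Continuous.subtype_mk continuous_subtype_val _)).prodMk
          (u'.continuous.comp continuous_subtype_val))) _)
  have hkey : ∀ y ∈ Vᶜ, F y = g y := by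
    intro y hyc
    by_cases hy : y ∈ closure V
    · have hu'0 : u' y = 0 := by
        apply Subtype.ext
        show u y = ((0 : unitInterval) : ℝ)
        simpa using hu0 hyc
      simp only [hFdef]
      rw [dif_pos hy, hHspec (g y, gn ⟨y, hcVU hy⟩, u' y) (Or.inl hu'0) (hcVW y hy)]
      show (if ((u' y : ℝ) ≤ 1/2) then g y else gn ⟨y, hcVU hy⟩) = g y
      rw [if_pos]
      rw [hu'0]
      norm_num
    · simp only [hFdef]
      rw [dif_neg hy]
  have hF2 : ContinuousOn F Vᶜ :=
    ContinuousOn.congr g.continuous.continuousOn hkey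
  have hFcont : Continuous F := by
    rw [continuous_iff_continuousAt]
    intro y
    by_cases hy : y ∈ closure V
    · by_cases hyV : y ∈ V
      · exact hF1.continuousAt (mem_nhds_iff.2 ⟨V, subset_closure, hVopen, hyV⟩)
      · have h1 := hF1 y hy
        have h2 := hF2 y hyV
        have := h1.union h2
        rwa [show closure V ∪ Vᶜ = univ from
          eq_univ_of_forall fun z => (em (z ∈ V)).imp (fun h => subset_closure h) id,
          continuousWithinAt_univ] at this
    · refine hF2.continuousAt (mem_nhds_iff.2 ⟨(closure V)ᶜ, ?_, isClosed_closure.isOpen_compl,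
        hy⟩)
      exact compl_subset_compl.2 subset_closure
  refine ⟨⟨F, hFcont⟩, ?_⟩
  rintro ⟨z, hz⟩
  show F z = φ n ⟨z, hz⟩
  have hzV : z ∈ closure V := subset_closure (hZV hz)
  have hu'1 : u' z = 1 := by
    apply Subtype.ext
    show u z = ((1 : unitInterval) : ℝ)
    simpa using hu1 hz
  simp only [hFdef]
  rw [dif_pos hzV, hHspec (g z, gn ⟨z, hcVU hzV⟩, u' z) (Or.inr (Or.inr hu'1)) (hcVW z hzV)]
  show (if ((u' z : ℝ) ≤ 1/2) then g z else gn ⟨z, hcVU hzV⟩) = φ n ⟨z, hz⟩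
  rw [if_neg (by rw [hu'1]; norm_num), hgn z hz (hcVU hzV)]
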